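/- Let S be a positive semidefinite slack matrix of a self-dual polyhedral cone K ⊆ R^d, and suppose S is completely positive semidefinite, witnessed by PSD matrices A₁,...,Aₙ ∈ S^k_+ with S_{ij} = ⟨A_i, A_j⟩ (Frobenius inner product). Let K̄ be the convex cone generated by A₁,...,Aₙ and H their span. Then K̄ is linearly isomorphic to K, K̄ is self-dual on its span with respect to the Frobenius inner product, and K̄ = S^k_+ ∩ H. -/

import Mathlib

open Matrix Pointwise

/-- The Euclidean dual cone of `K ⊆ ℝ^d`. -/
def eucDual {d : ℕ} (K : Set (Fin d → ℝ)) : Set (Fin d → ℝ) :=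
  {y | ∀ x ∈ K, 0 ≤ x ⬝ᵥ y}

/-- A polyhedral cone: nonnegative combinations of finitely many vectors. -/
def IsPolyhedralCone {d : ℕ} (K : Set (Fin d → ℝ)) : Prop :=
  ∃ (n : ℕ) (v : Fin n → (Fin d → ℝ)),
    K = {x | ∃ c : Fin n → ℝ, (∀ i, 0 ≤ c i) ∧ x = ∑ i, c i • v i}

/-- The convex cone generated by the vectors `v 0, …, v (n-1)`. -/
def coneGenBy {n : ℕ} {V : Type*} [AddCommMonoid V] [Module ℝ V] (v : Fin n → V) : Set V :=
  {x | ∃ c : Fin n → ℝ, (∀ i, 0 ≤ c i) ∧ x = ∑ i, c i • v i}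

/-- `r` generates an extreme ray of the cone `K`. -/
def IsExtremeRayGen {d : ℕ} (K : Set (Fin d → ℝ)) (r : Fin d → ℝ) : Prop :=
  r ≠ 0 ∧ r ∈ K ∧
    ∀ x ∈ K, ∀ y ∈ K, (∃ c : ℝ, 0 ≤ c ∧ x + y = c • r) →
      (∃ a : ℝ, 0 ≤ a ∧ x = a • r) ∧ (∃ b : ℝ, 0 ≤ b ∧ y = b • r)

/-- The family `v` consists of generators of the distinct extreme rays of `K`,
one generator per extreme ray, covering all extreme rays of `K`. -/
def GensDistinctExtremeRays {d n : ℕ} (K : Set (Fin d → ℝ))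
    (v : Fin n → (Fin d → ℝ)) : Prop :=
  (∀ i, IsExtremeRayGen K (v i)) ∧
  (∀ i j, i ≠ j → ∀ c : ℝ, v i ≠ c • v j) ∧
  (∀ r, IsExtremeRayGen K r → ∃ i, ∃ c : ℝ, 0 < c ∧ r = c • v i)

/-- `M` is a slack matrix of the cone `K`: `M i j = ⟨x i, y j⟩` where the `x i`
generate the distinct extreme rays of `K` and the `y j` generate the distinct
extreme rays of the (Euclidean) dual cone of `K`. -/
def IsSlackMatrix {d n m : ℕ} (M : Matrix (Fin n) (Fin m) ℝ)
    (K : Set (Fin d → ℝ)) : Prop :=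
  ∃ (x : Fin n → (Fin d → ℝ)) (y : Fin m → (Fin d → ℝ)),
    GensDistinctExtremeRays K x ∧ GensDistinctExtremeRays (eucDual K) y ∧
    ∀ i j, M i j = x i ⬝ᵥ y j


section ConeBasics

variable {n : ℕ} {V W : Type*} [AddCommGroup V] [Module ℝ V] [AddCommGroup W] [Module ℝ W]
  {v : Fin n → V}

lemma coneGenBy.zero_mem : (0 : V) ∈ coneGenBy v :=
  ⟨0, fun _ => le_rfl, by simp⟩

lemma coneGenBy.gen_mem (i : Fin n) : v i ∈ coneGenBy v := by
  refine ⟨fun j => if j = i then 1 else 0, fun j => by positivity, ?_⟩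
  simp [ite_smul]

lemma coneGenBy.add_mem {a b : V} (ha : a ∈ coneGenBy v) (hb : b ∈ coneGenBy v) :
    a + b ∈ coneGenBy v := by
  obtain ⟨c, hc, rfl⟩ := ha
  obtain ⟨c', hc', rfl⟩ := hb
  exact ⟨c + c', fun i => add_nonneg (hc i) (hc' i), by
    simp [add_smul, Finset.sum_add_distrib]⟩

lemma coneGenBy.smul_mem {a : V} {t : ℝ} (ht : 0 ≤ t) (ha : a ∈ coneGenBy v) :
    t • a ∈ coneGenBy v := by
  obtain ⟨c, hc, rfl⟩ := ha
  exact ⟨t • c, fun i => mul_nonneg ht (hc i), by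
    simp [Finset.smul_sum, smul_smul]⟩

lemma coneGenBy.convex : Convex ℝ (coneGenBy v) := by
  intro a ha b hb s t hs ht _
  exact coneGenBy.add_mem (coneGenBy.smul_mem hs ha) (coneGenBy.smul_mem ht hb)

lemma coneGenBy.map (f : V →ₗ[ℝ] W) :
    f '' coneGenBy v = coneGenBy (fun i => f (v i)) := by
  ext w
  constructor
  · rintro ⟨a, ⟨c, hc, rfl⟩, rfl⟩
    exact ⟨c, hc, by simp [map_sum, _root_.map_smul]⟩
  · rintro ⟨c, hc, rfl⟩
    exact ⟨∑ i, c i • v i, ⟨c, hc, rfl⟩, by simp [map_sum, _root_.map_smul]⟩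

lemma coneGenBy.subset_of_mem {m : ℕ} {u : Fin m → V}
    (h : ∀ i, u i ∈ coneGenBy v) : coneGenBy u ⊆ coneGenBy v := by
  rintro a ⟨c, hc, rfl⟩
  classical
  induction (Finset.univ : Finset (Fin m)) using Finset.induction_on with
  | empty => simpa using coneGenBy.zero_mem
  | insert _ _ hx ih =>
      rw [Finset.sum_insert hx]
      exact coneGenBy.add_mem (coneGenBy.smul_mem (hc _) (h _)) ih

end ConeBasics

section MatrixFacts

variable {k : ℕ}

lemma psd_transpose_eq {M : Matrix (Fin k) (Fin k) ℝ} (h : M.PosSemidef) : Mᵀ = M := by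
  have := h.1
  rwa [Matrix.IsHermitian, Matrix.conjTranspose_eq_transpose_of_trivial] at this

lemma psd_trace_nonneg {M : Matrix (Fin k) (Fin k) ℝ} (h : M.PosSemidef) : 0 ≤ M.trace := by
  rw [Matrix.trace]
  apply Finset.sum_nonneg
  intro i _
  have h2 := h.dotProduct_mulVec_nonneg (Pi.single i 1)
  simpa [Matrix.mulVec_single, dotProduct, Pi.single_apply] using h2

open scoped MatrixOrder in
lemma psd_trace_mul_nonneg {M N : Matrix (Fin k) (Fin k) ℝ} (hM : M.PosSemidef)
    (hN : N.PosSemidef) : 0 ≤ (M * N).trace := by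
  have hs : CFC.sqrt N * CFC.sqrt N = N := CFC.sqrt_mul_sqrt_self N hN.nonneg
  have hpsd : ((CFC.sqrt N)ᴴ * M * CFC.sqrt N).PosSemidef := hM.conjTranspose_mul_mul_same _
  have hherm : (CFC.sqrt N)ᴴ = CFC.sqrt N := (CFC.sqrt_nonneg N).posSemidef.1
  calc (M * N).trace = (M * CFC.sqrt N * CFC.sqrt N).trace := by rw [Matrix.mul_assoc, hs]
    _ = (CFC.sqrt N * (M * CFC.sqrt N)).trace := (Matrix.trace_mul_comm _ _).symm
    _ = ((CFC.sqrt N)ᴴ * M * CFC.sqrt N).trace := by rw [hherm, Matrix.mul_assoc]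
    _ ≥ 0 := psd_trace_nonneg hpsd

lemma symm_trace_sq_eq_zero {M : Matrix (Fin k) (Fin k) ℝ} (h : Mᵀ = M)
    (htr : (M * M).trace = 0) : M = 0 := by
  have hexp : (M * M).trace = ∑ i, ∑ j, (M i j) ^ 2 := by
    rw [Matrix.trace]
    apply Finset.sum_congr rfl
    intro i _
    simp only [Matrix.diag_apply, Matrix.mul_apply]
    apply Finset.sum_congr rfl
    intro j _
    have h2 : M i j = M j i := by
      have h3 := congrFun (congrFun h j) i
      rwa [Matrix.transpose_apply] at h3
    rw [← h2, sq]
  rw [hexp] at htr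
  ext i j
  have h1 : ∀ i ∈ Finset.univ, (0:ℝ) ≤ ∑ j, (M i j)^2 :=
    fun i _ => Finset.sum_nonneg fun j _ => sq_nonneg _
  have h2 := (Finset.sum_eq_zero_iff_of_nonneg h1).1 htr i (Finset.mem_univ i)
  have h3 := (Finset.sum_eq_zero_iff_of_nonneg (fun j _ => sq_nonneg (M i j))).1 h2 j
    (Finset.mem_univ j)
  simpa using pow_eq_zero_iff (n := 2) (by norm_num) |>.1 h3

lemma psd_smul {M : Matrix (Fin k) (Fin k) ℝ} (h : M.PosSemidef) {c : ℝ} (hc : 0 ≤ c) :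
    (c • M).PosSemidef := by
  constructor
  · rw [Matrix.IsHermitian, Matrix.conjTranspose_eq_transpose_of_trivial, Matrix.transpose_smul,
      psd_transpose_eq h]
  · exact (h.smul hc).2

lemma dot_symm {k : ℕ} {M : Matrix (Fin k) (Fin k) ℝ} (h : ∀ i j, M i j = M j i)
    (a b : Fin k → ℝ) : a ⬝ᵥ M *ᵥ b = b ⬝ᵥ M *ᵥ a := by
  simp only [dotProduct, Matrix.mulVec, dotProduct, Finset.mul_sum]
  rw [Finset.sum_comm]
  apply Finset.sum_congr rfl
  intro i _
  apply Finset.sum_congr rfl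
  intro j _
  rw [h j i]
  ring

end MatrixFacts

section ComboMap

variable {n : ℕ} {V : Type*} [AddCommGroup V] [Module ℝ V]

/-- The linear map sending coefficients to the corresponding linear combination. -/
def comboMap (v : Fin n → V) : (Fin n → ℝ) →ₗ[ℝ] V where
  toFun c := ∑ i, c i • v i
  map_add' a b := by simp [add_smul, Finset.sum_add_distrib]
  map_smul' t a := by simp [Finset.smul_sum, smul_smul]

lemma comboMap_single (v : Fin n → V) (i : Fin n) :
    comboMap v (Pi.single i 1) = v i := by
  simp only [comboMap, LinearMap.coe_mk, AddHom.coe_mk]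
  rw [Finset.sum_eq_single i]
  · simp
  · intro j _ hj
    simp [Pi.single_apply, hj]
  · simp

lemma comboMap_range (v : Fin n → V) :
    LinearMap.range (comboMap v) = Submodule.span ℝ (Set.range v) := by
  apply le_antisymm
  · rintro w hw
    obtain ⟨c, rfl⟩ := LinearMap.mem_range.1 hw
    show (∑ i, c i • v i) ∈ Submodule.span ℝ (Set.range v)
    exact Submodule.sum_mem _ fun i _ =>
      Submodule.smul_mem _ _ (Submodule.subset_span (Set.mem_range_self i))
  · rw [Submodule.span_le]
    rintro - ⟨i, rfl⟩
    exact LinearMap.mem_range.2 ⟨Pi.single i 1, comboMap_single v i⟩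


end ComboMap

/-- Spanning criterion via the Euclidean structure. -/
lemma span_eq_top_of_dot {d : ℕ} (W : Submodule ℝ (Fin d → ℝ))
    (h : ∀ u : Fin d → ℝ, (∀ w ∈ W, w ⬝ᵥ u = 0) → u = 0) : W = ⊤ := by
  let e : (Fin d → ℝ) ≃ₗ[ℝ] EuclideanSpace ℝ (Fin d) :=
    (WithLp.linearEquiv 2 ℝ (Fin d → ℝ)).symm
  set W' : Submodule ℝ (EuclideanSpace ℝ (Fin d)) := W.map e.toLinearMap with hW'
  have hW'top : W' = ⊤ := by
    rw [← Submodule.orthogonal_eq_bot_iff]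
    rw [Submodule.eq_bot_iff]
    intro u' hu'
    have hu := fun w (hw : w ∈ W) =>
      (Submodule.mem_orthogonal W' u').1 hu' (e w) (Submodule.mem_map_of_mem hw)
    have : e.symm u' = 0 := by
      apply h
      intro w hw
      have := hu w hw
      rw [PiLp.inner_apply] at this
      simpa [dotProduct, e, mul_comm] using this
    simpa [e] using congrArg e this
  rw [Submodule.eq_top_iff']
  intro z
  have hz : e z ∈ W' := hW'top ▸ Submodule.mem_top
  obtain ⟨w, hw, hwz⟩ := Submodule.mem_map.1 hz
  rwa [← e.injective hwz]


def dotLin {d : ℕ} (w : Fin d → ℝ) : (Fin d → ℝ) →ₗ[ℝ] ℝ where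
  toFun z := w ⬝ᵥ z
  map_add' a b := by simp [dotProduct_add]
  map_smul' t a := by simp [dotProduct_smul]

lemma dotLin_apply {d : ℕ} (w z : Fin d → ℝ) : dotLin w z = w ⬝ᵥ z := rfl

/-- Minkowski-type theorem: a finitely generated cone admitting a strictly positive linear
functional is generated by (generators of) its extreme rays. -/
lemma mink {d m n : ℕ} {v : Fin m → (Fin d → ℝ)} {x : Fin n → (Fin d → ℝ)}
    (f : (Fin d → ℝ) →ₗ[ℝ] ℝ)
    (hf0 : ∀ z ∈ coneGenBy v, 0 ≤ f z)
    (hfs : ∀ z ∈ coneGenBy v, f z = 0 → z = 0)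
    (hx : ∀ i, IsExtremeRayGen (coneGenBy v) (x i))
    (hcov : ∀ r, IsExtremeRayGen (coneGenBy v) r → ∃ i, ∃ c : ℝ, 0 < c ∧ r = c • x i) :
    coneGenBy v = coneGenBy x := by
  classical
  refine Set.Subset.antisymm ?_ (coneGenBy.subset_of_mem fun i => (hx i).2.1)
  intro z hz
  rcases eq_or_ne z 0 with rfl | hz0
  · exact coneGenBy.zero_mem
  have ht : 0 < f z := lt_of_le_of_ne (hf0 z hz) (fun h => hz0 (hfs z hz h.symm))
  set C : Set (Fin d → ℝ) := coneGenBy v with hC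
  set B : Set (Fin d → ℝ) := {w | w ∈ C ∧ f w = 1} with hB
  have hBconv : Convex ℝ B := by
    intro a ha b hb s t hs htt hst
    exact ⟨coneGenBy.convex ha.1 hb.1 hs htt hst, by
      simp only [map_add, LinearMap.map_smul, smul_eq_mul, ha.2, hb.2, mul_one]; exact hst⟩
  have hfv : ∀ i, v i ≠ 0 → 0 < f (v i) := fun i hvi =>
    lt_of_le_of_ne (hf0 _ (coneGenBy.gen_mem i)) fun h => hvi (hfs _ (coneGenBy.gen_mem i) h.symm)
  set Tset : Set (Fin d → ℝ) := (fun i => (f (v i))⁻¹ • v i) '' {i | v i ≠ 0} with hT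
  have hTfin : Tset.Finite := (Set.toFinite _).image _
  have hTB : Tset ⊆ B := by
    rintro - ⟨i, hi, rfl⟩
    refine ⟨coneGenBy.smul_mem (inv_nonneg.2 (hf0 _ (coneGenBy.gen_mem i))) (coneGenBy.gen_mem i), ?_⟩
    rw [LinearMap.map_smul, smul_eq_mul, inv_mul_cancel₀ (hfv i hi).ne']
  have hBT : B ⊆ convexHull ℝ Tset := by
    rintro w ⟨⟨c, hc, rfl⟩, hf1⟩
    set s : Finset (Fin m) := Finset.univ.filter (fun i => v i ≠ 0) with hs
    have hsum : ∑ i ∈ s, c i * f (v i) = 1 := by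
      rw [Finset.sum_filter]
      rw [map_sum] at hf1
      simp only [LinearMap.map_smul, smul_eq_mul] at hf1
      rw [← hf1]
      apply Finset.sum_congr rfl
      intro i _
      by_cases h : v i = 0 <;> simp [h]
    have hmem := Finset.centerMass_mem_convexHull (t := s)
      (w := fun i => c i * f (v i)) (z := fun i => (f (v i))⁻¹ • v i)
      (fun i hi => mul_nonneg (hc i) (hf0 _ (coneGenBy.gen_mem i)))
      (by rw [hsum]; norm_num)
      (fun i hi => Set.mem_image_of_mem _ (show i ∈ {i | v i ≠ 0} by simpa [hs] using hi))
    rwa [Finset.centerMass_eq_of_sum_1 _ _ hsum, show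
      ∑ i ∈ s, (c i * f (v i)) • ((f (v i))⁻¹ • v i) = ∑ i, c i • v i from ?_] at hmem
    rw [Finset.sum_filter]
    apply Finset.sum_congr rfl
    intro i _
    by_cases h : v i = 0
    · simp [h]
    · rw [if_pos h, smul_smul, mul_assoc, mul_inv_cancel₀ (hfv i h).ne', mul_one]
  have hBcT : B = convexHull ℝ Tset := Set.Subset.antisymm hBT (convexHull_min hTB hBconv)
  have hcomp : IsCompact B := hBcT ▸ hTfin.isCompact_convexHull ℝ
  have hextfin : (B.extremePoints ℝ).Finite :=
    hTfin.subset (hBcT ▸ extremePoints_convexHull_subset)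
  have hKM : B = convexHull ℝ (B.extremePoints ℝ) := by
    conv_lhs => rw [← closure_convexHull_extremePoints hcomp hBconv]
    exact (hextfin.isClosed_convexHull (𝕜 := ℝ)).closure_eq
  have hext : ∀ p ∈ B.extremePoints ℝ, p ∈ coneGenBy x := by
    intro p hp
    obtain ⟨⟨hpC, hpf⟩, hpext⟩ := hp
    have hray : IsExtremeRayGen C p := by
      refine ⟨fun h => by simp [h] at hpf, hpC, ?_⟩
      rintro a ha b hb ⟨c, hc0, hab⟩
      have hfab : f a + f b = c := by
        have := congrArg f hab
        rwa [map_add, LinearMap.map_smul, smul_eq_mul, hpf, mul_one] at this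
      rcases eq_or_lt_of_le (hf0 a ha) with hfa | hfa
      · have ha0 : a = 0 := hfs a ha hfa.symm
        refine ⟨⟨0, le_rfl, by simp [ha0]⟩, ⟨c, hc0, ?_⟩⟩
        rw [← hab, ha0, zero_add]
      rcases eq_or_lt_of_le (hf0 b hb) with hfb | hfb
      · have hb0 : b = 0 := hfs b hb hfb.symm
        refine ⟨⟨c, hc0, ?_⟩, ⟨0, le_rfl, by simp [hb0]⟩⟩
        rw [← hab, hb0, add_zero]
      have hcpos : 0 < c := hfab ▸ add_pos hfa hfb
      have haB : (f a)⁻¹ • a ∈ B :=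
        ⟨coneGenBy.smul_mem (inv_nonneg.2 hfa.le) ha, by
          rw [LinearMap.map_smul, smul_eq_mul, inv_mul_cancel₀ hfa.ne']⟩
      have hbB : (f b)⁻¹ • b ∈ B :=
        ⟨coneGenBy.smul_mem (inv_nonneg.2 hfb.le) hb, by
          rw [LinearMap.map_smul, smul_eq_mul, inv_mul_cancel₀ hfb.ne']⟩
      have hseg : p ∈ openSegment ℝ ((f a)⁻¹ • a) ((f b)⁻¹ • b) := by
        refine ⟨f a / c, f b / c, div_pos hfa hcpos, div_pos hfb hcpos, ?_, ?_⟩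
        · rw [← add_div, hfab, div_self hcpos.ne']
        · have h1 : f a / c * (f a)⁻¹ = c⁻¹ := by
            rw [div_mul_eq_mul_div, mul_inv_cancel₀ hfa.ne', one_div]
          have h2 : f b / c * (f b)⁻¹ = c⁻¹ := by
            rw [div_mul_eq_mul_div, mul_inv_cancel₀ hfb.ne', one_div]
          rw [smul_smul, smul_smul, h1, h2, ← smul_add, hab, smul_smul,
            inv_mul_cancel₀ hcpos.ne', one_smul]
      obtain ⟨ha', hb'⟩ := (mem_extremePoints.1 (show p ∈ B.extremePoints ℝ from ⟨⟨hpC, hpf⟩, hpext⟩)).2 _ haB _ hbB hseg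
      refine ⟨⟨f a, hfa.le, ?_⟩, ⟨f b, hfb.le, ?_⟩⟩
      · rw [← ha', smul_smul, mul_inv_cancel₀ hfa.ne', one_smul]
      · rw [← hb', smul_smul, mul_inv_cancel₀ hfb.ne', one_smul]
    obtain ⟨i, c, hcpos, rfl⟩ := hcov p hray
    exact coneGenBy.smul_mem hcpos.le (coneGenBy.gen_mem i)
  have hw : (f z)⁻¹ • z ∈ B :=
    ⟨coneGenBy.smul_mem (inv_nonneg.2 ht.le) hz, by
      rw [LinearMap.map_smul, smul_eq_mul, inv_mul_cancel₀ ht.ne']⟩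
  rw [hKM] at hw
  have hw2 : (f z)⁻¹ • z ∈ coneGenBy x :=
    convexHull_min (fun p hp => hext p hp) coneGenBy.convex hw
  have hz' := coneGenBy.smul_mem ht.le hw2
  rwa [smul_smul, mul_inv_cancel₀ ht.ne', one_smul] at hz'

section MainHelpers

lemma sum_dotProduct' {d : ℕ} {ι : Type*} (s : Finset ι) (f : ι → (Fin d → ℝ)) (w : Fin d → ℝ) :
    (∑ i ∈ s, f i) ⬝ᵥ w = ∑ i ∈ s, f i ⬝ᵥ w := by
  simp only [dotProduct, Finset.sum_apply, Finset.sum_mul]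
  exact Finset.sum_comm

lemma dotProduct_sum' {d : ℕ} {ι : Type*} (s : Finset ι) (w : Fin d → ℝ) (f : ι → (Fin d → ℝ)) :
    w ⬝ᵥ (∑ i ∈ s, f i) = ∑ i ∈ s, w ⬝ᵥ f i := by
  simp only [dotProduct, Finset.sum_apply, Finset.mul_sum]
  exact Finset.sum_comm

lemma combo_dot_combo {d n₁ n₂ : ℕ} (x : Fin n₁ → Fin d → ℝ) (y : Fin n₂ → Fin d → ℝ)
    (lam : Fin n₁ → ℝ) (mu : Fin n₂ → ℝ) :
    comboMap x lam ⬝ᵥ comboMap y mu = ∑ i, ∑ j, lam i * mu j * (x i ⬝ᵥ y j) := by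
  show (∑ i, lam i • x i) ⬝ᵥ (∑ j, mu j • y j) = _
  rw [sum_dotProduct']
  refine Finset.sum_congr rfl fun i _ => ?_
  rw [smul_dotProduct, dotProduct_sum', Finset.smul_sum]
  refine Finset.sum_congr rfl fun j _ => ?_
  rw [dotProduct_smul]
  simp only [smul_eq_mul]
  ring

lemma quad_expand {n : ℕ} (S : Matrix (Fin n) (Fin n) ℝ) (lam mu : Fin n → ℝ) :
    lam ⬝ᵥ S *ᵥ mu = ∑ i, ∑ j, lam i * mu j * S i j := by
  simp only [dotProduct, Matrix.mulVec, Finset.mul_sum]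
  refine Finset.sum_congr rfl fun i _ => Finset.sum_congr rfl fun j _ => ?_
  ring

lemma combo_trace_combo {k n : ℕ} (A : Fin n → Matrix (Fin k) (Fin k) ℝ)
    (lam mu : Fin n → ℝ) :
    (comboMap A lam * comboMap A mu).trace = ∑ i, ∑ j, lam i * mu j * (A i * A j).trace := by
  show ((∑ i, lam i • A i) * (∑ j, mu j • A j)).trace = _
  rw [Finset.sum_mul, Matrix.trace_sum]
  refine Finset.sum_congr rfl fun i _ => ?_
  rw [Matrix.smul_mul, Matrix.trace_smul, Finset.mul_sum, Matrix.trace_sum, Finset.smul_sum]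
  refine Finset.sum_congr rfl fun j _ => ?_
  rw [Matrix.mul_smul, Matrix.trace_smul]
  simp only [smul_eq_mul]
  ring

lemma trace_mul_combo {k n : ℕ} (B : Matrix (Fin k) (Fin k) ℝ)
    (A : Fin n → Matrix (Fin k) (Fin k) ℝ) (mu : Fin n → ℝ) :
    (B * comboMap A mu).trace = ∑ j, mu j * (B * A j).trace := by
  show (B * ∑ j, mu j • A j).trace = _
  rw [Finset.mul_sum, Matrix.trace_sum]
  refine Finset.sum_congr rfl fun j _ => ?_
  rw [Matrix.mul_smul, Matrix.trace_smul, smul_eq_mul]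

lemma dot_combo {d n : ℕ} (w : Fin d → ℝ) (y : Fin n → Fin d → ℝ) (mu : Fin n → ℝ) :
    w ⬝ᵥ comboMap y mu = ∑ j, mu j * (w ⬝ᵥ y j) := by
  show w ⬝ᵥ (∑ j, mu j • y j) = _
  rw [dotProduct_sum']
  refine Finset.sum_congr rfl fun j _ => ?_
  rw [dotProduct_smul, smul_eq_mul]

end MainHelpers

/-- Let `S` be a PSD slack matrix of a self-dual polyhedral cone
`K ⊆ ℝ^d`, and suppose `S` is completely positive semidefinite, witnessed by PSD
matrices `A 1, …, A n` with `S i j = ⟨A i, A j⟩` (Frobenius inner product). Let `K̄` be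
the convex cone generated by the `A i` and `H` their span. Then `K̄` is linearly
isomorphic to `K`, `K̄` is self-dual on its span with respect to the Frobenius inner
product, and `K̄ = PSD^k ∩ H`. -/
theorem cpsd_psd_slack_gives_selfDual_psd_slice
    {d n k : ℕ} (K : Set (Fin d → ℝ))
    (hpoly : IsPolyhedralCone K)
    (hsd : ∃ P : Matrix (Fin d) (Fin d) ℝ, P.PosDef ∧
        K = {y : Fin d → ℝ | ∀ x ∈ K, 0 ≤ x ⬝ᵥ P.mulVec y})
    (S : Matrix (Fin n) (Fin n) ℝ) (hslack : IsSlackMatrix S K)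
    (hpsd : S.PosSemidef)
    (A : Fin n → Matrix (Fin k) (Fin k) ℝ) (hApsd : ∀ i, (A i).PosSemidef)
    (hgram : ∀ i j, S i j = (A i * A j).trace) :
    (∃ φ : (Fin d → ℝ) →ₗ[ℝ] Matrix (Fin k) (Fin k) ℝ,
        Function.Injective φ ∧ φ '' K = coneGenBy A) ∧
    coneGenBy A
      = {Y : Matrix (Fin k) (Fin k) ℝ | Y.IsSymm ∧ ∀ Z ∈ coneGenBy A, 0 ≤ (Z * Y).trace}
          ∩ (Submodule.span ℝ (Set.range A) : Set (Matrix (Fin k) (Fin k) ℝ)) ∧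
    coneGenBy A
      = {Y : Matrix (Fin k) (Fin k) ℝ | Y.PosSemidef}
          ∩ (Submodule.span ℝ (Set.range A) : Set (Matrix (Fin k) (Fin k) ℝ)) := by
  classical
  obtain ⟨P, hP, hKdual⟩ := hsd
  obtain ⟨m, v, hKv⟩ := hpoly
  obtain ⟨x, y, hgx, hgy, hSxy⟩ := hslack
  have hKcone : K = coneGenBy v := hKv
  -- basic facts about P
  have hPsym : ∀ i j, P i j = P j i := by
    intro i j
    have h3 := congrFun (congrFun hP.1 j) i
    rwa [Matrix.conjTranspose_apply, star_trivial] at h3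
  have hPdot := dot_symm hPsym
  have hPpos : ∀ z : Fin d → ℝ, z ≠ 0 → 0 < z ⬝ᵥ P *ᵥ z := by
    intro z hz
    have := hP.dotProduct_mulVec_pos hz
    simpa using this
  have hPzero : ∀ z : Fin d → ℝ, z ⬝ᵥ P *ᵥ z = 0 → z = 0 := by
    intro z h
    by_contra hz
    exact absurd h (ne_of_gt (hPpos z hz))
  have hmemK : ∀ z, z ∈ K ↔ ∀ w ∈ K, 0 ≤ w ⬝ᵥ P *ᵥ z := by
    intro z
    constructor
    · intro h
      rw [hKdual] at h
      exact h
    · intro h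
      rw [hKdual]
      exact h
  have hpointed : ∀ a, a ∈ K → -a ∈ K → a = 0 := by
    intro a ha hna
    have h1 : 0 ≤ a ⬝ᵥ P *ᵥ a := (hmemK a).1 ha a ha
    have h2 : 0 ≤ a ⬝ᵥ P *ᵥ (-a) := (hmemK (-a)).1 hna a ha
    rw [Matrix.mulVec_neg, dotProduct_neg] at h2
    exact hPzero a (le_antisymm (by linarith) h1)
  have hPunit : IsUnit P := hP.isUnit
  have hPsurj : Function.Surjective (P.mulVec) := Matrix.mulVec_surjective_iff_isUnit.2 hPunit
  have hPinj : Function.Injective (P.mulVec) := Matrix.mulVec_injective_iff_isUnit.2 hPunit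
  -- the dual cone is the image of K under P
  have hdualim : eucDual K = P.mulVec '' K := by
    ext w
    constructor
    · intro hw
      obtain ⟨z, rfl⟩ := hPsurj w
      refine ⟨z, ?_, rfl⟩
      rw [hmemK]
      intro u hu
      exact hw u hu
    · rintro ⟨z, hz, rfl⟩
      intro u hu
      exact (hmemK z).1 hz u hu
  have hdualcone : eucDual K = coneGenBy (fun i => P *ᵥ v i) := by
    have hPfun : P.mulVec = ⇑P.mulVecLin := by
      funext z
      rw [Matrix.mulVecLin_apply]
    rw [hdualim, hKcone, hPfun, coneGenBy.map P.mulVecLin]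
  -- generators of K lie in K
  have hvK : ∀ i, v i ∈ K := by
    intro i
    rw [hKcone]
    exact coneGenBy.gen_mem i
  -- strictly positive functional on K
  set e0 : Fin d → ℝ := ∑ i, v i with he0
  set fK : (Fin d → ℝ) →ₗ[ℝ] ℝ := (dotLin e0).comp P.mulVecLin with hfK
  have hfKapp : ∀ z, fK z = ∑ i, v i ⬝ᵥ P *ᵥ z := by
    intro z
    show dotLin e0 (P.mulVecLin z) = _
    rw [dotLin_apply, Matrix.mulVecLin_apply, he0, sum_dotProduct']
  have hfK0 : ∀ z ∈ coneGenBy v, 0 ≤ fK z := by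
    intro z hz
    rw [← hKcone] at hz
    rw [hfKapp]
    exact Finset.sum_nonneg fun i _ => (hmemK z).1 hz (v i) (hvK i)
  have hfKs : ∀ z ∈ coneGenBy v, fK z = 0 → z = 0 := by
    intro z hz h0
    rw [← hKcone] at hz
    rw [hfKapp] at h0
    have hterm : ∀ i ∈ Finset.univ, v i ⬝ᵥ P *ᵥ z = 0 :=
      (Finset.sum_eq_zero_iff_of_nonneg
        (fun i _ => (hmemK z).1 hz (v i) (hvK i))).1 h0
    have hall : ∀ w ∈ K, w ⬝ᵥ P *ᵥ z = 0 := by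
      intro w hw
      rw [hKcone] at hw
      obtain ⟨c, hc, rfl⟩ := hw
      rw [sum_dotProduct']
      apply Finset.sum_eq_zero
      intro i hi
      rw [smul_dotProduct, hterm i hi, smul_zero]
    exact hPzero z (hall z hz)
  -- K is the cone on the x i
  have hERx : ∀ i, IsExtremeRayGen (coneGenBy v) (x i) := by
    intro i
    rw [← hKcone]
    exact hgx.1 i
  have hcovx : ∀ r, IsExtremeRayGen (coneGenBy v) r → ∃ i, ∃ c : ℝ, 0 < c ∧ r = c • x i := by
    intro r hr
    rw [← hKcone] at hr
    exact hgx.2.2 r hr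
  have hKx : K = coneGenBy x := by
    rw [hKcone]
    exact mink fK hfK0 hfKs hERx hcovx
  -- strictly positive functional on the dual cone
  set gD : (Fin d → ℝ) →ₗ[ℝ] ℝ := dotLin e0 with hgD
  have hgDapp : ∀ w, gD w = ∑ i, v i ⬝ᵥ w := by
    intro w
    rw [hgD, dotLin_apply, he0, sum_dotProduct']
  have hgD0 : ∀ w ∈ coneGenBy (fun i => P *ᵥ v i), 0 ≤ gD w := by
    intro w hw
    rw [← hdualcone] at hw
    rw [hgDapp]
    exact Finset.sum_nonneg fun i _ => hw (v i) (hvK i)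
  have hgDs : ∀ w ∈ coneGenBy (fun i => P *ᵥ v i), gD w = 0 → w = 0 := by
    intro w hw h0
    rw [← hdualcone] at hw
    rw [hgDapp] at h0
    have hterm : ∀ i ∈ Finset.univ, v i ⬝ᵥ w = 0 :=
      (Finset.sum_eq_zero_iff_of_nonneg (fun i _ => hw (v i) (hvK i))).1 h0
    have hall : ∀ u ∈ K, u ⬝ᵥ w = 0 := by
      intro u hu
      rw [hKcone] at hu
      obtain ⟨c, hc, rfl⟩ := hu
      rw [sum_dotProduct']
      apply Finset.sum_eq_zero
      intro i hi
      rw [smul_dotProduct, hterm i hi, smul_zero]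
    have hnw : -w ∈ eucDual K := by
      intro u hu
      rw [dotProduct_neg, hall u hu, neg_zero]
    obtain ⟨a, ha, haw⟩ := hdualim ▸ hw
    obtain ⟨b, hb, hbw⟩ := hdualim ▸ hnw
    have hab : P *ᵥ (a + b) = 0 := by
      rw [Matrix.mulVec_add, haw, hbw, add_neg_cancel]
    have hab0 : a + b = 0 := by
      apply hPinj
      rw [hab, Matrix.mulVec_zero]
    have hbna : b = -a := eq_neg_of_add_eq_zero_right hab0
    have hna : -a ∈ K := by rwa [← hbna]
    have ha0 : a = 0 := hpointed a ha hna
    rw [← haw, ha0, Matrix.mulVec_zero]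
  -- the dual cone is the cone on the y i
  have hERy : ∀ i, IsExtremeRayGen (coneGenBy (fun i => P *ᵥ v i)) (y i) := by
    intro i
    rw [← hdualcone]
    exact hgy.1 i
  have hcovy : ∀ r, IsExtremeRayGen (coneGenBy (fun i => P *ᵥ v i)) r →
      ∃ i, ∃ c : ℝ, 0 < c ∧ r = c • y i := by
    intro r hr
    rw [← hdualcone] at hr
    exact hgy.2.2 r hr
  have hDy : eucDual K = coneGenBy y := by
    rw [hdualcone]
    exact mink gD hgD0 hgDs hERy hcovy
  -- cones lie inside spans
  have hconespanx : ∀ z ∈ coneGenBy x, z ∈ Submodule.span ℝ (Set.range x) := by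
    rintro z ⟨c, hc, rfl⟩
    exact Submodule.sum_mem _ fun i _ =>
      Submodule.smul_mem _ _ (Submodule.subset_span (Set.mem_range_self i))
  have hconespany : ∀ z ∈ coneGenBy y, z ∈ Submodule.span ℝ (Set.range y) := by
    rintro z ⟨c, hc, rfl⟩
    exact Submodule.sum_mem _ fun i _ =>
      Submodule.smul_mem _ _ (Submodule.subset_span (Set.mem_range_self i))
  -- the x i and y i span everything
  have hXtop : Submodule.span ℝ (Set.range x) = ⊤ := by
    apply span_eq_top_of_dot
    intro u hu
    obtain ⟨z, hz⟩ := hPsurj u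
    have hzK : z ∈ K := by
      rw [hmemK]
      intro w hw
      have hw' : w ∈ Submodule.span ℝ (Set.range x) := by
        rw [hKx] at hw
        exact hconespanx w hw
      have h0 : w ⬝ᵥ u = 0 := hu w hw'
      show (0:ℝ) ≤ w ⬝ᵥ P.mulVec z
      rw [hz, h0]
    have hz' : z ∈ Submodule.span ℝ (Set.range x) := by
      rw [hKx] at hzK
      exact hconespanx z hzK
    have h1 : z ⬝ᵥ P *ᵥ z = 0 := by
      show z ⬝ᵥ P.mulVec z = 0
      rw [hz]
      exact hu z hz'
    rw [← hz, hPzero z h1, Matrix.mulVec_zero]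
  have hYtop : Submodule.span ℝ (Set.range y) = ⊤ := by
    apply span_eq_top_of_dot
    intro u hu
    have hKu : ∀ a ∈ K, a ⬝ᵥ P *ᵥ u = 0 := by
      intro a ha
      have h1 : P *ᵥ a ∈ coneGenBy y := by
        rw [← hDy, hdualim]
        exact ⟨a, ha, rfl⟩
      have h2 : (P *ᵥ a) ⬝ᵥ u = 0 := hu _ (hconespany _ h1)
      rw [hPdot a u, dotProduct_comm]
      exact h2
    have huK : u ∈ K := by
      rw [hmemK]
      intro w hw
      rw [hKu w hw]
    have hnuK : -u ∈ K := by
      rw [hmemK]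
      intro w hw
      rw [Matrix.mulVec_neg, dotProduct_neg, hKu w hw, neg_zero]
    exact hpointed u huK hnuK
  have hXsurj : Function.Surjective (comboMap x) :=
    LinearMap.range_eq_top.1 (by rw [comboMap_range]; exact hXtop)
  have hYsurj : Function.Surjective (comboMap y) :=
    LinearMap.range_eq_top.1 (by rw [comboMap_range]; exact hYtop)
  -- symmetry of S
  have hSsym : ∀ i j, S i j = S j i := by
    intro i j
    have h3 := congrFun (congrFun hpsd.1 j) i
    rwa [Matrix.conjTranspose_apply, star_trivial] at h3
  have hSdot := dot_symm hSsym
  -- bilinear identities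
  have hquad : ∀ lam mu : Fin n → ℝ, lam ⬝ᵥ S *ᵥ mu = comboMap x lam ⬝ᵥ comboMap y mu := by
    intro lam mu
    rw [quad_expand, combo_dot_combo]
    exact Finset.sum_congr rfl fun i _ => Finset.sum_congr rfl fun j _ => by rw [hSxy i j]
  have hquadA : ∀ lam mu : Fin n → ℝ,
      lam ⬝ᵥ S *ᵥ mu = (comboMap A lam * comboMap A mu).trace := by
    intro lam mu
    rw [quad_expand, combo_trace_combo]
    exact Finset.sum_congr rfl fun i _ => Finset.sum_congr rfl fun j _ => by rw [hgram i j]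
  -- symmetry of combinations of the A i
  have hAsym : ∀ lam : Fin n → ℝ, (comboMap A lam)ᵀ = comboMap A lam := by
    intro lam
    show (∑ i, lam i • A i)ᵀ = ∑ i, lam i • A i
    rw [Matrix.transpose_sum]
    exact Finset.sum_congr rfl fun i _ => by
      rw [Matrix.transpose_smul, psd_transpose_eq (hApsd i)]
  -- kernel inclusions
  have hkerXA : ∀ lam : Fin n → ℝ, comboMap x lam = 0 → comboMap A lam = 0 := by
    intro lam h
    apply symm_trace_sq_eq_zero (hAsym lam)
    rw [← hquadA lam lam, hquad lam lam, h, zero_dotProduct]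
  have hkerAY : ∀ lam : Fin n → ℝ, comboMap A lam = 0 → comboMap y lam = 0 := by
    intro lam h
    obtain ⟨mu, hmu⟩ := hXsurj (comboMap y lam)
    have h1 : mu ⬝ᵥ S *ᵥ lam = 0 := by
      rw [hquadA, h, mul_zero, Matrix.trace_zero]
    rw [hquad, hmu] at h1
    exact dotProduct_self_eq_zero.1 h1
  have hkerYX : ∀ lam : Fin n → ℝ, comboMap y lam = 0 → comboMap x lam = 0 := by
    intro lam h
    obtain ⟨mu, hmu⟩ := hYsurj (comboMap x lam)
    have h1 : mu ⬝ᵥ S *ᵥ lam = 0 := by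
      rw [hquad, h, dotProduct_zero]
    have h2 : lam ⬝ᵥ S *ᵥ mu = 0 := by rw [hSdot lam mu, h1]
    rw [hquad, hmu] at h2
    exact dotProduct_self_eq_zero.1 h2
  have hkerXY : ∀ lam : Fin n → ℝ, comboMap x lam = 0 → comboMap y lam = 0 :=
    fun lam h => hkerAY lam (hkerXA lam h)
  -- a linear section of comboMap x
  obtain ⟨g, hg⟩ := (comboMap x).exists_rightInverse_of_surjective
    (LinearMap.range_eq_top.2 hXsurj)
  have hgap : ∀ u, comboMap x (g u) = u := by
    intro u
    have := LinearMap.ext_iff.1 hg u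
    simpa using this
  set Φ : (Fin d → ℝ) →ₗ[ℝ] Matrix (Fin k) (Fin k) ℝ := (comboMap A).comp g with hΦdef
  set X : (Fin d → ℝ) →ₗ[ℝ] (Fin d → ℝ) := (comboMap y).comp g with hXdef
  have hΦeq : ∀ lam : Fin n → ℝ, Φ (comboMap x lam) = comboMap A lam := by
    intro lam
    have hker : comboMap x (g (comboMap x lam) - lam) = 0 := by
      rw [map_sub, hgap, sub_self]
    have h2 := hkerXA _ hker
    rw [map_sub, sub_eq_zero] at h2
    simpa [hΦdef, LinearMap.comp_apply] using h2
  have hXeq : ∀ lam : Fin n → ℝ, X (comboMap x lam) = comboMap y lam := by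
    intro lam
    have hker : comboMap x (g (comboMap x lam) - lam) = 0 := by
      rw [map_sub, hgap, sub_self]
    have h2 := hkerXY _ hker
    rw [map_sub, sub_eq_zero] at h2
    simpa [hXdef, LinearMap.comp_apply] using h2
  have hΦx : ∀ i, Φ (x i) = A i := by
    intro i
    rw [show x i = comboMap x (Pi.single i 1) from (comboMap_single x i).symm, hΦeq]
    exact comboMap_single A i
  have hXx : ∀ i, X (x i) = y i := by
    intro i
    rw [show x i = comboMap x (Pi.single i 1) from (comboMap_single x i).symm, hXeq]
    exact comboMap_single y i
  -- injectivity
  have hΦker : ∀ z, Φ z = 0 → z = 0 := by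
    intro z hz
    obtain ⟨lam, rfl⟩ := hXsurj z
    rw [hΦeq] at hz
    exact hkerYX lam (hkerAY lam hz)
  have hΦinj : Function.Injective Φ := by
    intro a b hab
    have h1 : Φ (a - b) = 0 := by rw [map_sub, hab, sub_self]
    have h2 := hΦker _ h1
    rwa [sub_eq_zero] at h2
  have hXker : ∀ z, X z = 0 → z = 0 := by
    intro z hz
    obtain ⟨lam, rfl⟩ := hXsurj z
    rw [hXeq] at hz
    exact hkerYX lam hz
  have hXinj : Function.Injective X := by
    intro a b hab
    have h1 : X (a - b) = 0 := by rw [map_sub, hab, sub_self]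
    have h2 := hXker _ h1
    rwa [sub_eq_zero] at h2
  -- images
  have himgΦ : Φ '' K = coneGenBy A := by
    rw [hKx, coneGenBy.map Φ]
    have he : (fun i => Φ (x i)) = A := funext hΦx
    rw [he]
  have himgX : X '' K = eucDual K := by
    rw [hDy, hKx, coneGenBy.map X]
    have he : (fun i => X (x i)) = y := funext hXx
    rw [he]
  -- the pairing identity
  have hpair : ∀ (i : Fin n) (z : Fin d → ℝ), (A i * Φ z).trace = x i ⬝ᵥ X z := by
    intro i z
    obtain ⟨lam, rfl⟩ := hXsurj z
    rw [hΦeq, hXeq, trace_mul_combo, dot_combo]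
    exact Finset.sum_congr rfl fun j _ => by rw [← hgram i j, hSxy i j]
  -- membership criterion
  have hcrit : ∀ z, (∀ i, 0 ≤ x i ⬝ᵥ X z) → z ∈ K := by
    intro z hz
    have hmem : X z ∈ eucDual K := by
      intro u hu
      rw [hKx] at hu
      obtain ⟨c, hc, rfl⟩ := hu
      rw [sum_dotProduct']
      apply Finset.sum_nonneg
      intro i _
      rw [smul_dotProduct]
      exact smul_nonneg (hc i) (hz i)
    rw [← himgX] at hmem
    obtain ⟨z', hz', hzz⟩ := hmem
    rwa [← hXinj hzz]
  -- the range of Φ is the span of the A i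
  have hrangeΦ : ∀ Y ∈ Submodule.span ℝ (Set.range A), ∃ z, Φ z = Y := by
    intro Y hY
    rw [← comboMap_range] at hY
    obtain ⟨lam, rfl⟩ := LinearMap.mem_range.1 hY
    exact ⟨comboMap x lam, hΦeq lam⟩
  -- the cone on the A i consists of PSD matrices in the span
  have hconePSD : ∀ Y ∈ coneGenBy A, Y.PosSemidef := by
    rintro Y ⟨c, hc, rfl⟩
    induction (Finset.univ : Finset (Fin n)) using Finset.induction_on with
    | empty => simpa using Matrix.PosSemidef.zero
    | insert _ _ hxmem ih =>
        rw [Finset.sum_insert hxmem]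
        exact (psd_smul (hApsd _) (hc _)).add ih
  have hconeH : ∀ Y ∈ coneGenBy A, Y ∈ Submodule.span ℝ (Set.range A) := by
    rintro Y ⟨c, hc, rfl⟩
    exact Submodule.sum_mem _ fun i _ =>
      Submodule.smul_mem _ _ (Submodule.subset_span (Set.mem_range_self i))
  -- conclusions
  refine ⟨⟨Φ, hΦinj, himgΦ⟩, ?_, ?_⟩
  · ext Y
    constructor
    · intro hY
      exact ⟨⟨psd_transpose_eq (hconePSD Y hY),
        fun Z hZ => psd_trace_mul_nonneg (hconePSD Z hZ) (hconePSD Y hY)⟩, hconeH Y hY⟩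
    · rintro ⟨⟨hYsymm, hYdual⟩, hYH⟩
      obtain ⟨z, rfl⟩ := hrangeΦ Y hYH
      have hz : ∀ i, 0 ≤ x i ⬝ᵥ X z :=
        fun i => hpair i z ▸ hYdual (A i) (coneGenBy.gen_mem i)
      rw [← himgΦ]
      exact ⟨z, hcrit z hz, rfl⟩
  · ext Y
    constructor
    · intro hY
      exact ⟨hconePSD Y hY, hconeH Y hY⟩
    · rintro ⟨hYpsd, hYH⟩
      obtain ⟨z, rfl⟩ := hrangeΦ Y hYH
      have hz : ∀ i, 0 ≤ x i ⬝ᵥ X z :=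
        fun i => hpair i z ▸ psd_trace_mul_nonneg (hApsd i) hYpsd
      rw [← himgΦ]
      exact ⟨z, hcrit z hz, rfl⟩
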